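/- With N(p,q) defined via the Bredon–Wood continued-fraction recipe, N(p,q) ≡ p/2 (mod 2) for all nonzero coprime integers p, q with p even. -/

import Mathlib

/-- The value of the continued fraction `[a₀, a₁, …, aₙ] = a₀ + 1/(a₁ + 1/(⋯ + 1/aₙ))`. -/
def cfVal : List ℕ → ℚ
  | [] => 0
  | [a] => (a : ℚ)
  | a :: l => (a : ℚ) + 1 / cfVal l

/-- Bredon–Wood sum: given the list `[a₀, …, aₙ]`, a running sum `s` of the `bⱼ` so far, and a
flag recording whether the previous `b` equalled the previous `a`, compute `b₀ + ⋯ + bₙ`,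
where `b₀ = a₀` and, for `i ≥ 1`, `bᵢ = 0` if `b_{i-1} = a_{i-1}` and `b₀ + ⋯ + b_{i-1}` is
even, and `bᵢ = aᵢ` otherwise. -/
def bwAux : List ℕ → ℕ → Bool → ℕ
  | [], s, _ => s
  | a :: l, s, full =>
    let b := if full = true ∧ Even s then 0 else a
    bwAux l (s + b) (decide (b = a))

lemma bwAux_cons (a : ℕ) (l : List ℕ) (s : ℕ) (full : Bool) :
    bwAux (a :: l) s full =
      bwAux l (s + if full = true ∧ Even s then 0 else a)
        (decide ((if full = true ∧ Even s then 0 else a) = a)) := rfl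

lemma bw_step_false (a : ℕ) (l : List ℕ) (s : ℕ) :
    bwAux (a :: l) s false = bwAux l (s + a) true := by
  simp [bwAux_cons]

lemma bw_step_skip (a : ℕ) (l : List ℕ) (s : ℕ) (ha : a ≠ 0) (hs : Even s) :
    bwAux (a :: l) s true = bwAux l s false := by
  simp [bwAux_cons, hs, Ne.symm ha]

lemma bw_step_odd (a : ℕ) (l : List ℕ) (s : ℕ) (full : Bool) (hs : ¬ Even s) :
    bwAux (a :: l) s full = bwAux l (s + a) true := by
  simp [bwAux_cons, hs]

/-- Tail-constraint predicate: all entries positive and the last entry at least 2. -/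
def T : List ℕ → Prop
  | [] => False
  | [a] => 2 ≤ a
  | a :: l => 1 ≤ a ∧ T l

lemma mkT : ∀ (l : List ℕ), l ≠ [] → (∀ i, i + 1 < l.length → 0 < l.getD i 0) →
    1 < l.getD (l.length - 1) 0 → T l := by
  intro l
  induction l with
  | nil => simp
  | cons a l ih =>
    rcases l with _ | ⟨b, m⟩
    · intro _ _ h2
      simp at h2
      show 2 ≤ a
      omega
    · intro _ h1 h2
      refine ⟨?_, ih (by simp) ?_ ?_⟩
      · have := h1 0 (by simp)
        simp at this
        omega
      · intro i hi
        have := h1 (i+1) (by simp at hi ⊢; omega)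
        simpa using this
      · simpa using h2

lemma T_one_lt : ∀ (l : List ℕ), T l → 1 < cfVal l := by
  intro l
  induction l with
  | nil => exact fun h => h.elim
  | cons a l ih =>
    rcases l with _ | ⟨b, m⟩
    · intro h
      have h2 : 2 ≤ a := h
      have : (2:ℚ) ≤ (a:ℚ) := by exact_mod_cast h2
      show (1:ℚ) < (a:ℚ)
      linarith
    · rintro ⟨h1, h2⟩
      have hlt := ih h2
      have he : cfVal (a :: b :: m) = (a:ℚ) + 1 / cfVal (b :: m) := rfl
      rw [he]
      have hpos : 0 < 1 / cfVal (b::m) := by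
        apply one_div_pos.mpr; linarith
      have ha : (1:ℚ) ≤ (a:ℚ) := by exact_mod_cast h1
      linarith

lemma frac_eq (m n x y : ℕ) (h : (m:ℚ)/n = (x:ℚ)/y) (hm : 0 < m)
    (hmn : Nat.Coprime m n) (hxy : Nat.Coprime x y) (hn : 0 < n) (hy : 0 < y) :
    m = x ∧ n = y := by
  have hn' : ((n:ℚ)) ≠ 0 := by positivity
  have hy' : ((y:ℚ)) ≠ 0 := by positivity
  rw [div_eq_div_iff hn' hy'] at h
  have hnat : m * y = x * n := by exact_mod_cast h
  have hmx : m ∣ x := hmn.dvd_of_dvd_mul_right ⟨y, hnat.symm⟩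
  have hxm : x ∣ m := hxy.dvd_of_dvd_mul_right ⟨n, hnat⟩
  have hme : m = x := Nat.dvd_antisymm hmx hxm
  subst hme
  have : y = n := Nat.eq_of_mul_eq_mul_left hm hnat
  exact ⟨rfl, this.symm⟩

lemma not_both_even {Y R : ℕ} (h : Nat.Coprime Y R) (hY : Y % 2 = 0) (hR : R % 2 = 0) :
    False := by
  have h2 : 2 ∣ Nat.gcd Y R := Nat.dvd_gcd (by omega) (by omega)
  have h1 : Nat.gcd Y R = 1 := h
  omega

lemma key : ∀ (l : List ℕ), T l → ∀ (x y s : ℕ), Nat.Coprime x y → 0 < y → y < x →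
    cfVal l = (x : ℚ) / (y : ℚ) →
    ((s % 2 = 0 → x % 2 = 0 → bwAux l s false % 4 = (s + x) % 4) ∧
     (s % 2 = 0 → y % 2 = 0 → bwAux l s true % 4 = (s + y) % 4) ∧
     (s % 2 = 1 → x % 2 = 1 → y % 2 = 1 → ∀ full, bwAux l s full % 4 = (s + x * y) % 4)) := by
  intro l
  induction l with
  | nil => exact fun h => h.elim
  | cons a l ih =>
    rcases l with _ | ⟨b, m⟩
    · -- singleton [a]
      intro hT x y s hcop hy hyx hval
      have ha : 2 ≤ a := hT
      have h0 : cfVal [a] = (a:ℚ) := rfl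
      rw [h0] at hval
      obtain ⟨hax, h1y⟩ := frac_eq a 1 x y (by push_cast; rw [div_one]; exact_mod_cast hval)
        (by omega) (Nat.coprime_one_right a) hcop one_pos hy
      refine ⟨?_, ?_, ?_⟩
      · intro hs hx2
        rw [bw_step_false]
        have : bwAux [] (s + a) true = s + a := rfl
        rw [this]
        omega
      · intro hs hy2
        omega
      · intro hs hx2 hy2 full
        rw [bw_step_odd _ _ _ _ (by rw [Nat.even_iff]; omega)]
        have : bwAux [] (s + a) true = s + a := rfl
        rw [this, ← hax, ← h1y]
        omega
    · -- a :: b :: m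
      intro hT x y s hcop hy hyx hval
      obtain ⟨ha1, hT2⟩ := hT
      have h1 : 1 < cfVal (b :: m) := T_one_lt _ hT2
      set qq := cfVal (b :: m) with hqq
      have hq0 : 0 < qq := lt_trans one_pos h1
      have hnum : 0 < qq.num := Rat.num_pos.mpr hq0
      set Y := qq.num.natAbs with hYdef
      set R := qq.den with hRdef
      have hYcast : ((Y:ℤ)) = qq.num := Int.natAbs_of_nonneg hnum.le
      have hYQ : ((Y:ℚ)) = ((qq.num : ℤ) : ℚ) := by exact_mod_cast hYcast
      have hq' : cfVal (b :: m) = (Y:ℚ) / (R:ℚ) := by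
        rw [← hqq, hYQ]
        exact (Rat.num_div_den qq).symm
      have hYR : Nat.Coprime Y R := qq.reduced
      have hRpos : 0 < R := qq.pos
      have hRY : R < Y := by
        have h1' : 1 < (Y:ℚ) / (R:ℚ) := by rw [← hq', ← hqq]; exact h1
        have hRq : (0:ℚ) < (R:ℚ) := by exact_mod_cast hRpos
        have := (one_lt_div hRq).mp h1'
        exact_mod_cast this
      have hYpos : 0 < Y := lt_trans hRpos hRY
      have e1 : cfVal (a :: b :: m) = ((a * Y + R : ℕ) : ℚ) / ((Y : ℕ) : ℚ) := by
        have he : cfVal (a :: b :: m) = (a:ℚ) + 1 / cfVal (b :: m) := rfl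
        rw [he, hq']
        have hY0 : ((Y:ℚ)) ≠ 0 := by positivity
        have hR0 : ((R:ℚ)) ≠ 0 := by positivity
        push_cast
        field_simp
      have hcopAY : Nat.Coprime (a * Y + R) Y := by
        rw [add_comm]
        exact (Nat.coprime_add_mul_right_left R Y a).mpr hYR.symm
      obtain ⟨hx, hy'⟩ := frac_eq (a*Y+R) Y x y (by rw [← e1, hval]) (by positivity)
        hcopAY hcop hYpos hy
      subst hx
      subst hy'
      have ihh := ih hT2 Y R
      refine ⟨?_, ?_, ?_⟩
      · -- s even, full = false, x even
        intro hs hx2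
        rw [bw_step_false]
        rcases Nat.mod_two_eq_zero_or_one a with ha2 | ha2
        · obtain ⟨d, hd⟩ : ∃ d, a = 2*d := ⟨a/2, by omega⟩
          obtain ⟨u0, hu0⟩ : ∃ u, a * Y = 2 * u := ⟨d * Y, by rw [hd]; ring⟩
          have hR2 : R % 2 = 0 := by rw [hu0] at hx2; omega
          have hY2 : Y % 2 = 1 := by
            rcases Nat.mod_two_eq_zero_or_one Y with h | h
            · exact absurd (not_both_even hYR h hR2) (fun h => h)
            · exact h
          obtain ⟨c, hc⟩ : ∃ c, Y = 2*c+1 := ⟨Y/2, by omega⟩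
          have ihr := (ihh (s+a) hYR hRpos hRY hq').2.1 (by omega) hR2
          rw [ihr]
          obtain ⟨u, hu⟩ : ∃ u, a * Y = 4*u + a := ⟨d*c, by rw [hd, hc]; ring⟩
          rw [hu]
          omega
        · obtain ⟨d, hd⟩ : ∃ d, a = 2*d+1 := ⟨a/2, by omega⟩
          have hY2 : Y % 2 = 1 := by
            rcases Nat.mod_two_eq_zero_or_one Y with h | h
            · obtain ⟨c, hc⟩ : ∃ c, Y = 2*c := ⟨Y/2, by omega⟩
              obtain ⟨u0, hu0⟩ : ∃ u, a * Y = 2 * u := ⟨a*c, by rw [hc]; ring⟩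
              have hR2 : R % 2 = 0 := by rw [hu0] at hx2; omega
              exact absurd (not_both_even hYR h hR2) (fun h => h)
            · exact h
          obtain ⟨c, hc⟩ : ∃ c, Y = 2*c+1 := ⟨Y/2, by omega⟩
          obtain ⟨u0, hu0⟩ : ∃ u, a * Y = 2 * u + 1 := ⟨2*d*c+d+c, by rw [hd, hc]; ring⟩
          have hR2 : R % 2 = 1 := by rw [hu0] at hx2; omega
          obtain ⟨e, he⟩ : ∃ e, R = 2*e+1 := ⟨R/2, by omega⟩
          have ihr := (ihh (s+a) hYR hRpos hRY hq').2.2 (by omega) hY2 hR2 true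
          rw [ihr]
          obtain ⟨u, hu⟩ : ∃ u, Y * R = 4*u + 2*c + 2*e + 1 := ⟨c*e, by rw [hc, he]; ring⟩
          obtain ⟨v, hv⟩ : ∃ v, a * Y = 4*v + 2*d + 2*c + 1 := ⟨d*c, by rw [hd, hc]; ring⟩
          rw [hu, hv]
          omega
      · -- s even, full = true, y even
        intro hs hy2
        have hse : Even s := Nat.even_iff.mpr hs
        rw [bw_step_skip _ _ _ (by omega) hse]
        exact (ihh s hYR hRpos hRY hq').1 hs hy2
      · -- s odd
        intro hs hx2 hy2 full
        rw [bw_step_odd _ _ _ _ (by rw [Nat.even_iff]; omega)]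
        obtain ⟨c, hc⟩ : ∃ c, Y = 2*c+1 := ⟨Y/2, by omega⟩
        rcases Nat.mod_two_eq_zero_or_one a with ha2 | ha2
        · obtain ⟨d, hd⟩ : ∃ d, a = 2*d := ⟨a/2, by omega⟩
          obtain ⟨u0, hu0⟩ : ∃ u, a * Y = 2 * u := ⟨d*Y, by rw [hd]; ring⟩
          have hR2 : R % 2 = 1 := by rw [hu0] at hx2; omega
          obtain ⟨e, he⟩ : ∃ e, R = 2*e+1 := ⟨R/2, by omega⟩
          have ihr := (ihh (s+a) hYR hRpos hRY hq').2.2 (by omega) hy2 hR2 true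
          rw [ihr]
          obtain ⟨u, hu⟩ : ∃ u, Y * R = 4*u + 2*c + 2*e + 1 := ⟨c*e, by rw [hc, he]; ring⟩
          obtain ⟨v, hv⟩ : ∃ v, (a * Y + R) * Y = 4*v + 2*c + 2*d + 2*e + 1 :=
            ⟨2*d*c*c + 2*d*c + c*e, by rw [hd, hc, he]; ring⟩
          rw [hu, hv]
          omega
        · obtain ⟨d, hd⟩ : ∃ d, a = 2*d+1 := ⟨a/2, by omega⟩
          obtain ⟨u0, hu0⟩ : ∃ u, a * Y = 2 * u + 1 := ⟨2*d*c+d+c, by rw [hd, hc]; ring⟩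
          have hR2 : R % 2 = 0 := by rw [hu0] at hx2; omega
          obtain ⟨e, he⟩ : ∃ e, R = 2*e := ⟨R/2, by omega⟩
          have ihr := (ihh (s+a) hYR hRpos hRY hq').2.1 (by omega) hR2
          rw [ihr]
          obtain ⟨v, hv⟩ : ∃ v, (a * Y + R) * Y = 4*v + 2*d + 4*c + 2*e + 1 :=
            ⟨2*d*c*c + 2*d*c + c*c + c*e, by rw [hd, hc, he]; ring⟩
          rw [hv]
          omega

/-- For nonzero coprime integers `p, q` with `p` even, write `|p|/|q| = [a₀, …, aₙ]` as a
continued fraction with `a₀ ≥ 0`, `a₁, …, a_{n-1} > 0`, `aₙ > 1`. Then the Bredon–Wood sum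
`N(p,q) = (b₀ + ⋯ + bₙ)/2` satisfies `N(p,q) ≡ p/2 (mod 2)`. -/
theorem stmt10 (p q : ℤ) (hp : p ≠ 0) (hq : q ≠ 0) (hcop : IsCoprime p q)
    (hpe : p % 2 = 0) (L : List ℕ) (hL : L ≠ [])
    (hmid : ∀ i : ℕ, 0 < i → i + 1 < L.length → 0 < L.getD i 0)
    (hlast : 2 ≤ L.length → 1 < L.getD (L.length - 1) 0)
    (hval : cfVal L = (p.natAbs : ℚ) / (q.natAbs : ℚ)) :
    ((bwAux L 0 false : ℤ) / 2) % 2 = (p / 2) % 2 := by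
  have hP : 0 < p.natAbs := Int.natAbs_pos.mpr hp
  have hQ : 0 < q.natAbs := Int.natAbs_pos.mpr hq
  have hcopn : Nat.Coprime p.natAbs q.natAbs := by
    rw [Int.isCoprime_iff_gcd_eq_one] at hcop
    exact hcop
  have hpm := Int.natAbs_eq p
  have hP2 : p.natAbs % 2 = 0 := by omega
  rcases L with _ | ⟨a0, l⟩
  · exact absurd rfl hL
  rcases l with _ | ⟨b, m⟩
  · have h0 : cfVal [a0] = (a0:ℚ) := rfl
    rw [h0] at hval
    obtain ⟨hPa, hQ1⟩ := frac_eq p.natAbs q.natAbs a0 1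
      (by push_cast; rw [div_one]; exact_mod_cast hval.symm) hP hcopn (Nat.coprime_one_right _) hQ one_pos
    have hbw : bwAux [a0] 0 false = a0 := by
      rw [bw_step_false, Nat.zero_add]
      rfl
    rw [hbw]
    omega
  · have hT : T (b :: m) := by
      apply mkT _ (by simp)
      · intro i hi
        have := hmid (i+1) (by omega) (by simp at hi ⊢; omega)
        simpa using this
      · have h2 : 2 ≤ (a0 :: b :: m).length := by simp
        have := hlast h2
        simpa using this
    have h1 : 1 < cfVal (b :: m) := T_one_lt _ hT
    set qq := cfVal (b :: m) with hqq
    have hq0 : 0 < qq := lt_trans one_pos h1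
    have hnum : 0 < qq.num := Rat.num_pos.mpr hq0
    set Y := qq.num.natAbs with hYdef
    set R := qq.den with hRdef
    have hYcast : ((Y:ℤ)) = qq.num := Int.natAbs_of_nonneg hnum.le
    have hYQ : ((Y:ℚ)) = ((qq.num : ℤ) : ℚ) := by exact_mod_cast hYcast
    have hq' : cfVal (b :: m) = (Y:ℚ) / (R:ℚ) := by
      rw [← hqq, hYQ]
      exact (Rat.num_div_den qq).symm
    have hYR : Nat.Coprime Y R := qq.reduced
    have hRpos : 0 < R := qq.pos
    have hRY : R < Y := by
      have h1' : 1 < (Y:ℚ) / (R:ℚ) := by rw [← hq', ← hqq]; exact h1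
      have hRq : (0:ℚ) < (R:ℚ) := by exact_mod_cast hRpos
      have := (one_lt_div hRq).mp h1'
      exact_mod_cast this
    have hYpos : 0 < Y := lt_trans hRpos hRY
    have e1 : cfVal (a0 :: b :: m) = ((a0 * Y + R : ℕ) : ℚ) / ((Y : ℕ) : ℚ) := by
      have he : cfVal (a0 :: b :: m) = (a0:ℚ) + 1 / cfVal (b :: m) := rfl
      rw [he, hq']
      have hY0 : ((Y:ℚ)) ≠ 0 := by positivity
      have hR0 : ((R:ℚ)) ≠ 0 := by positivity
      push_cast
      field_simp
    have hcopAY : Nat.Coprime (a0 * Y + R) Y := by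
      rw [add_comm]
      exact (Nat.coprime_add_mul_right_left R Y a0).mpr hYR.symm
    obtain ⟨hPx, hQy⟩ := frac_eq p.natAbs q.natAbs (a0*Y+R) Y (by rw [← hval, e1]) hP
      hcopn hcopAY hQ hYpos
    have hstep : bwAux (a0 :: b :: m) 0 false = bwAux (b::m) a0 true := by
      rw [bw_step_false, Nat.zero_add]
    rw [hstep]
    have htriple := key (b::m) hT Y R a0 hYR hRpos hRY hq'
    have hS : bwAux (b::m) a0 true % 4 = p.natAbs % 4 := by
      rcases Nat.mod_two_eq_zero_or_one a0 with ha2 | ha2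
      · obtain ⟨d, hd⟩ : ∃ d, a0 = 2*d := ⟨a0/2, by omega⟩
        obtain ⟨u0, hu0⟩ : ∃ u, a0 * Y = 2 * u := ⟨d*Y, by rw [hd]; ring⟩
        have hR2 : R % 2 = 0 := by
          rw [hPx, hu0] at hP2
          omega
        have hY2 : Y % 2 = 1 := by
          rcases Nat.mod_two_eq_zero_or_one Y with h | h
          · exact absurd (not_both_even hYR h hR2) (fun h => h)
          · exact h
        obtain ⟨c, hc⟩ : ∃ c, Y = 2*c+1 := ⟨Y/2, by omega⟩
        rw [htriple.2.1 (by omega) hR2, hPx]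
        obtain ⟨u, hu⟩ : ∃ u, a0 * Y = 4*u + a0 := ⟨d*c, by rw [hd, hc]; ring⟩
        rw [hu]
        omega
      · obtain ⟨d, hd⟩ : ∃ d, a0 = 2*d+1 := ⟨a0/2, by omega⟩
        have hY2 : Y % 2 = 1 := by
          rcases Nat.mod_two_eq_zero_or_one Y with h | h
          · obtain ⟨c, hc⟩ : ∃ c, Y = 2*c := ⟨Y/2, by omega⟩
            obtain ⟨u0, hu0⟩ : ∃ u, a0 * Y = 2 * u := ⟨a0*c, by rw [hc]; ring⟩
            have hR2 : R % 2 = 0 := by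
              rw [hPx, hu0] at hP2
              omega
            exact absurd (not_both_even hYR h hR2) (fun h => h)
          · exact h
        obtain ⟨c, hc⟩ : ∃ c, Y = 2*c+1 := ⟨Y/2, by omega⟩
        obtain ⟨u0, hu0⟩ : ∃ u, a0 * Y = 2 * u + 1 := ⟨2*d*c+d+c, by rw [hd, hc]; ring⟩
        have hR2 : R % 2 = 1 := by
          rw [hPx, hu0] at hP2
          omega
        obtain ⟨e, he⟩ : ∃ e, R = 2*e+1 := ⟨R/2, by omega⟩
        rw [htriple.2.2 (by omega) hY2 hR2 true, hPx]
        obtain ⟨u, hu⟩ : ∃ u, Y * R = 4*u + 2*c + 2*e + 1 := ⟨c*e, by rw [hc, he]; ring⟩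
        obtain ⟨v, hv⟩ : ∃ v, a0 * Y = 4*v + 2*d + 2*c + 1 := ⟨d*c, by rw [hd, hc]; ring⟩
        rw [hu, hv]
        omega
    omega
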